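/- Let 0 < δ ≤ 1/4 and let s = 1/2 + δ/2 + it with t real. Then |Γ(s + 9/4)·Γ(s − 1/4)| / |Γ(2s + 1)| ≤ 5.84·(1 + |t|)^{1/2}. -/

import Mathlib

open Real Complex Filter Finset Topology

namespace GQB


/-- the basic factor `1 + T / x ^ 2` -/
noncomputable def gf (T x : ℝ) : ℝ := 1 + T / x ^ 2

lemma gf_one_le {T x : ℝ} (hT : 0 ≤ T) (hx : 0 < x) : 1 ≤ gf T x := by
  have : 0 ≤ T / x ^ 2 := div_nonneg hT (by positivity)
  simp [gf]; linarith

lemma gf_pos {T x : ℝ} (hT : 0 ≤ T) (hx : 0 < x) : 0 < gf T x :=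
  lt_of_lt_of_le one_pos (gf_one_le hT hx)

lemma gf_anti {T x y : ℝ} (hT : 0 ≤ T) (hx : 0 < x) (hxy : x ≤ y) : gf T y ≤ gf T x := by
  have hy : 0 < y := lt_of_lt_of_le hx hxy
  unfold gf
  have : T / y ^ 2 ≤ T / x ^ 2 := by
    apply div_le_div_of_nonneg_left hT (by positivity)
    · nlinarith
  linarith

/-- Hölder-type inequality: `1 + u^(1/4) v^(3/4) ≤ (1+u)^(1/4) (1+v)^(3/4)`. -/
lemma holder14 {u v : ℝ} (hu : 0 ≤ u) (hv : 0 ≤ v) :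
    1 + u ^ ((1:ℝ)/4) * v ^ ((3:ℝ)/4) ≤ (1 + u) ^ ((1:ℝ)/4) * (1 + v) ^ ((3:ℝ)/4) := by
  have h1u : (0:ℝ) < 1 + u := by linarith
  have h1v : (0:ℝ) < 1 + v := by linarith
  have X : (0:ℝ) < (1 + u) ^ ((1:ℝ)/4) * (1 + v) ^ ((3:ℝ)/4) := by positivity
  rw [← div_le_one X, add_div]
  have e1 : (1:ℝ) / ((1 + u) ^ ((1:ℝ)/4) * (1 + v) ^ ((3:ℝ)/4))
      = (1/(1+u)) ^ ((1:ℝ)/4) * (1/(1+v)) ^ ((3:ℝ)/4) := by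
    rw [Real.div_rpow (by norm_num) h1u.le, Real.div_rpow (by norm_num) h1v.le]
    rw [Real.one_rpow, Real.one_rpow]
    rw [div_mul_div_comm]
    norm_num
  have e2 : u ^ ((1:ℝ)/4) * v ^ ((3:ℝ)/4) / ((1 + u) ^ ((1:ℝ)/4) * (1 + v) ^ ((3:ℝ)/4))
      = (u/(1+u)) ^ ((1:ℝ)/4) * (v/(1+v)) ^ ((3:ℝ)/4) := by
    rw [Real.div_rpow hu h1u.le, Real.div_rpow hv h1v.le, div_mul_div_comm]
  have g1 := Real.geom_mean_le_arith_mean2_weighted (by norm_num : (0:ℝ) ≤ 1/4)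
    (by norm_num : (0:ℝ) ≤ 3/4) (by positivity : (0:ℝ) ≤ 1/(1+u))
    (by positivity : (0:ℝ) ≤ 1/(1+v)) (by norm_num)
  have g2 := Real.geom_mean_le_arith_mean2_weighted (by norm_num : (0:ℝ) ≤ 1/4)
    (by norm_num : (0:ℝ) ≤ 3/4) (by positivity : (0:ℝ) ≤ u/(1+u))
    (by positivity : (0:ℝ) ≤ v/(1+v)) (by norm_num)
  rw [e1, e2]
  have hsum : 1/4 * (1/(1+u)) + 3/4 * (1/(1+v)) + (1/4 * (u/(1+u)) + 3/4 * (v/(1+v))) = 1 := by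
    field_simp; ring
  linarith

/-- key convexity inequality: `f(y)^4 ≤ f(y-3/4) * f(y+1/4)^3`. -/
lemma key4 {T y : ℝ} (hT : 0 ≤ T) (hy : 3/4 < y) :
    gf T y ^ 4 ≤ gf T (y - 3/4) * gf T (y + 1/4) ^ 3 := by
  have ha : (0:ℝ) < y - 3/4 := by linarith
  have hb : (0:ℝ) < y + 1/4 := by linarith
  have hy0 : (0:ℝ) < y := by linarith
  set a := y - 3/4 with hadef
  set b := y + 1/4 with hbdef
  set u := T / a ^ 2 with hudef
  set v := T / b ^ 2 with hvdef
  have hu : 0 ≤ u := by positivity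
  have hv : 0 ≤ v := by positivity
  -- step 1 : T / y^2 ≤ u^(1/4) v^(3/4)
  have step1 : T / y ^ 2 ≤ u ^ ((1:ℝ)/4) * v ^ ((3:ℝ)/4) := by
    rcases eq_or_lt_of_le hT with h0 | hTpos
    · rw [← h0] at hudef hvdef ⊢
      simp [hudef, hvdef, Real.zero_rpow (by norm_num : ((1:ℝ)/4) ≠ 0)]
    · -- geometric mean bound : a^(1/4) b^(3/4) ≤ y
      have gm : a ^ ((1:ℝ)/4) * b ^ ((3:ℝ)/4) ≤ y := by
        have := Real.geom_mean_le_arith_mean2_weighted (by norm_num : (0:ℝ) ≤ 1/4)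
          (by norm_num : (0:ℝ) ≤ 3/4) ha.le hb.le (by norm_num)
        calc a ^ ((1:ℝ)/4) * b ^ ((3:ℝ)/4) ≤ 1/4 * a + 3/4 * b := this
        _ = y := by rw [hadef, hbdef]; ring
      have gm2 : a ^ ((1:ℝ)/2) * b ^ ((3:ℝ)/2) ≤ y ^ 2 := by
        have h := mul_le_mul gm gm (by positivity) hy0.le
        calc a ^ ((1:ℝ)/2) * b ^ ((3:ℝ)/2)
            = (a ^ ((1:ℝ)/4) * b ^ ((3:ℝ)/4)) * (a ^ ((1:ℝ)/4) * b ^ ((3:ℝ)/4)) := by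
              rw [mul_mul_mul_comm, ← Real.rpow_add ha, ← Real.rpow_add hb]; norm_num
          _ ≤ y * y := h
          _ = y ^ 2 := (sq y).symm
      have huv : u ^ ((1:ℝ)/4) * v ^ ((3:ℝ)/4) = T / (a ^ ((1:ℝ)/2) * b ^ ((3:ℝ)/2)) := by
        rw [hudef, hvdef, Real.div_rpow hT (by positivity), Real.div_rpow hT (by positivity)]
        rw [div_mul_div_comm, ← Real.rpow_add hTpos]
        norm_num
        rw [← Real.rpow_natCast a 2, ← Real.rpow_natCast b 2, ← Real.rpow_mul ha.le,
          ← Real.rpow_mul hb.le]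
        norm_num
      rw [huv]
      exact div_le_div_of_nonneg_left hT (by positivity) gm2
  -- step 2 : Hölder
  have step2 : gf T y ≤ (gf T a) ^ ((1:ℝ)/4) * (gf T b) ^ ((3:ℝ)/4) := by
    have := holder14 hu hv
    unfold gf
    calc 1 + T / y ^ 2 ≤ 1 + u ^ ((1:ℝ)/4) * v ^ ((3:ℝ)/4) := by linarith [step1]
      _ ≤ (1 + u) ^ ((1:ℝ)/4) * (1 + v) ^ ((3:ℝ)/4) := this
  -- raise to 4th power
  have hga : 0 ≤ gf T a := (gf_pos hT ha).le
  have hgb : 0 ≤ gf T b := (gf_pos hT hb).le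
  have hgy : 0 ≤ gf T y := (gf_pos hT hy0).le
  calc gf T y ^ 4 ≤ ((gf T a) ^ ((1:ℝ)/4) * (gf T b) ^ ((3:ℝ)/4)) ^ 4 := by
        apply pow_le_pow_left₀ hgy step2
    _ = gf T a * gf T b ^ 3 := by
        rw [mul_pow, ← Real.rpow_natCast ((gf T a) ^ ((1:ℝ)/4)) 4,
          ← Real.rpow_natCast ((gf T b) ^ ((3:ℝ)/4)) 4,
          ← Real.rpow_mul hga, ← Real.rpow_mul hgb]
        norm_num



lemma prod_range_parity (g : ℕ → ℝ) (N : ℕ) :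
    ∏ j ∈ range N, g j =
      (∏ m ∈ range ((N+1)/2), g (2*m)) * ∏ m ∈ range (N/2), g (2*m+1) := by
  induction N with
  | zero => simp
  | succ N ih =>
    rcases Nat.even_or_odd N with ⟨m, hm⟩ | ⟨m, hm⟩
    · have c1 : (N+1+1)/2 = m+1 := by omega
      have c2 : (N+1)/2 = m := by omega
      have c3 : N/2 = m := by omega
      rw [Finset.prod_range_succ, ih, c1, c2, c3,
        Finset.prod_range_succ (fun x => g (2*x)) m, show 2*m = N by omega]
      ring
    · have c1 : (N+1+1)/2 = m+1 := by omega
      have c2 : (N+1)/2 = m+1 := by omega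
      have c3 : N/2 = m := by omega
      rw [Finset.prod_range_succ, ih, c1, c2, c3,
        Finset.prod_range_succ (fun x => g (2*x+1)) m, show 2*m+1 = N by omega]
      ring

lemma one_le_prod_real {g : ℕ → ℝ} (hg : ∀ i, 1 ≤ g i) (k : ℕ) :
    1 ≤ ∏ m ∈ range k, g m := by
  induction k with
  | zero => simp
  | succ k ih =>
    rw [Finset.prod_range_succ]
    nlinarith [hg k]

lemma prod_pad {g : ℕ → ℝ} {k K : ℕ} (hkK : k ≤ K) (hg : ∀ i, 1 ≤ g i) :
    ∏ m ∈ range k, g m ≤ ∏ m ∈ range K, g m := by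
  obtain ⟨d, rfl⟩ : ∃ d, K = k + d := ⟨K - k, by omega⟩
  rw [Finset.prod_range_add]
  have h1 : (1:ℝ) ≤ ∏ m ∈ range k, g m := one_le_prod_real hg k
  have h2 : (1:ℝ) ≤ ∏ m ∈ range d, g (k + m) := by
    have := one_le_prod_real (g := fun m => g (k+m)) (fun i => hg _) d
    simpa using this
  nlinarith

lemma main_prod_ineq (T σ : ℝ) (hT : 0 ≤ T) (hσ : 1/2 ≤ σ)
    (n : ℕ) (hn : 2 ≤ n) :
    (∏ j ∈ range (n+1), gf T (σ + ((j:ℝ)+1)/2)) ^ 4 ≤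
      (gf T (5/4) * gf T (7/4)) *
      ((∏ j ∈ range (n+1), gf T (σ + 9/4 + (j:ℝ))) *
       (∏ j ∈ range (n+1), gf T (σ - 1/4 + (j:ℝ)))) ^ 4 := by
  have hσ0 : (0:ℝ) < σ - 1/4 := by linarith
  set F : ℕ → ℝ := fun m => gf T (σ + 9/4 + (m:ℝ)) with hF
  set H : ℕ → ℝ := fun m => gf T (σ - 1/4 + (m:ℝ)) with hH
  have hF1 : ∀ m, 1 ≤ F m := fun m => gf_one_le hT (by positivity)
  have hH1 : ∀ m, 1 ≤ H m := fun m => gf_one_le hT (by positivity)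
  have hF0 : ∀ m, (0:ℝ) ≤ F m := fun m => le_trans zero_le_one (hF1 m)
  have hH0 : ∀ m, (0:ℝ) ≤ H m := fun m => le_trans zero_le_one (hH1 m)
  have hcast : ∀ m : ℕ, (0:ℝ) ≤ (m:ℝ) := fun m => Nat.cast_nonneg m
  rw [prod_range_parity]
  obtain ⟨e, he⟩ : ∃ e, (n+1+1)/2 = e + 1 := ⟨(n+1+1)/2 - 1, by omega⟩
  obtain ⟨o, ho⟩ : ∃ o, (n+1)/2 = o + 1 := ⟨(n+1)/2 - 1, by omega⟩
  have hen : e + 2 ≤ n + 1 := by omega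
  have hon : o ≤ n + 1 := by omega
  rw [he, ho]
  have heven : ∏ m ∈ range (e+1), gf T (σ + (((2*m : ℕ) : ℝ) + 1)/2)
      = (∏ m ∈ range e, gf T (σ + 3/2 + (m:ℝ))) * gf T (σ + 1/2) := by
    rw [Finset.prod_range_succ']
    congr 1
    · apply Finset.prod_congr rfl; intro m _; congr 1; push_cast; ring
    · congr 1; push_cast; ring
  have hodd : ∏ m ∈ range (o+1), gf T (σ + (((2*m+1 : ℕ) : ℝ) + 1)/2)
      = (∏ m ∈ range o, gf T (σ + 2 + (m:ℝ))) * gf T (σ + 1) := by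
    rw [Finset.prod_range_succ']
    congr 1
    · apply Finset.prod_congr rfl; intro m _; congr 1; push_cast; ring
    · congr 1; push_cast; ring
  rw [heven, hodd]
  -- abbreviations
  set PE := ∏ m ∈ range e, gf T (σ + 3/2 + (m:ℝ)) with hPE
  set PO := ∏ m ∈ range o, gf T (σ + 2 + (m:ℝ)) with hPO
  set QH := ∏ m ∈ range e, H (m+2) with hQH
  set QF := ∏ m ∈ range o, F m with hQF
  set BH := ∏ m ∈ range (n+1), H m with hBH
  set BF := ∏ m ∈ range (n+1), F m with hBF
  have hPE0 : 0 ≤ PE := Finset.prod_nonneg fun m _ => (gf_pos hT (by positivity)).le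
  have hPO0 : 0 ≤ PO := Finset.prod_nonneg fun m _ => (gf_pos hT (by positivity)).le
  have hQH0 : 0 ≤ QH := Finset.prod_nonneg fun m _ => hH0 _
  have hQF0 : 0 ≤ QF := Finset.prod_nonneg fun m _ => hF0 _
  have hQH1 : (1:ℝ) ≤ QH := one_le_prod_real (fun m => hH1 _) e
  have hQF1 : (1:ℝ) ≤ QF := one_le_prod_real (fun m => hF1 _) o
  -- even chain
  have A1 : PE ^ 4 ≤ H 1 * QH ^ 4 := by
    have step : ∀ m ∈ range e, gf T (σ + 3/2 + (m:ℝ)) ^ 4 ≤ H (m+1) * H (m+2) ^ 3 := by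
      intro m _
      have hy : (3:ℝ)/4 < σ + 3/2 + (m:ℝ) := by
        have : (0:ℝ) ≤ (m:ℝ) := Nat.cast_nonneg m
        linarith
      have h := key4 hT hy
      have e1 : σ + 3/2 + (m:ℝ) - 3/4 = σ - 1/4 + ((m+1:ℕ):ℝ) := by push_cast; ring
      have e2 : σ + 3/2 + (m:ℝ) + 1/4 = σ - 1/4 + ((m+2:ℕ):ℝ) := by push_cast; ring
      rw [e1, e2] at h
      exact h
    have h1 : PE ^ 4 = ∏ m ∈ range e, gf T (σ + 3/2 + (m:ℝ)) ^ 4 := by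
      rw [hPE, ← Finset.prod_pow]
    have h2 : ∏ m ∈ range e, gf T (σ + 3/2 + (m:ℝ)) ^ 4
        ≤ ∏ m ∈ range e, (H (m+1) * H (m+2) ^ 3) := by
      apply Finset.prod_le_prod
        (fun m _ => pow_nonneg (gf_pos hT (by have := hcast m; linarith)).le 4) step
    have h3 : ∏ m ∈ range e, (H (m+1) * H (m+2) ^ 3)
        = (∏ m ∈ range e, H (m+1)) * (∏ m ∈ range e, H (m+2)) ^ 3 := by
      rw [Finset.prod_mul_distrib, Finset.prod_pow]
    have h4 : (∏ m ∈ range e, H (m+1)) ≤ H 1 * QH := by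
      rcases Nat.eq_zero_or_pos e with rfl | hepos
      · simpa [hQH] using hH1 1
      · obtain ⟨e', rfl⟩ : ∃ e', e = e' + 1 := ⟨e - 1, by omega⟩
        rw [Finset.prod_range_succ']
        have : ∏ m ∈ range e', H (m + 1 + 1) ≤ QH := by
          rw [hQH]
          exact prod_pad (by omega) (fun i => hH1 _)
        calc (∏ m ∈ range e', H (m+1+1)) * H (0+1) ≤ QH * H 1 :=
              mul_le_mul this (le_of_eq rfl) (hH0 _) hQH0
          _ = H 1 * QH := mul_comm _ _
    calc PE ^ 4 = ∏ m ∈ range e, gf T (σ + 3/2 + (m:ℝ)) ^ 4 := h1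
      _ ≤ (∏ m ∈ range e, H (m+1)) * (∏ m ∈ range e, H (m+2)) ^ 3 := h2.trans h3.le
      _ ≤ (H 1 * QH) * QH ^ 3 := by
          apply mul_le_mul h4 (le_of_eq rfl) (pow_nonneg hQH0 3)
            (mul_nonneg (hH0 1) hQH0)
      _ = H 1 * QH ^ 4 := by ring
  -- odd chain
  have A2 : PO ^ 4 ≤ gf T (σ + 5/4) * QF ^ 4 := by
    have step : ∀ m ∈ range o, gf T (σ + 2 + (m:ℝ)) ^ 4 ≤ gf T (σ + 5/4 + (m:ℝ)) * F m ^ 3 := by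
      intro m _
      have hy : (3:ℝ)/4 < σ + 2 + (m:ℝ) := by
        have : (0:ℝ) ≤ (m:ℝ) := Nat.cast_nonneg m
        linarith
      have h := key4 hT hy
      have e1 : σ + 2 + (m:ℝ) - 3/4 = σ + 5/4 + (m:ℝ) := by ring
      have e2 : σ + 2 + (m:ℝ) + 1/4 = σ + 9/4 + (m:ℝ) := by ring
      rw [e1, e2] at h
      exact h
    have h2 : ∏ m ∈ range o, gf T (σ + 2 + (m:ℝ)) ^ 4
        ≤ ∏ m ∈ range o, (gf T (σ + 5/4 + (m:ℝ)) * F m ^ 3) := by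
      apply Finset.prod_le_prod
        (fun m _ => pow_nonneg (gf_pos hT (by have := hcast m; linarith)).le 4) step
    have h3 : ∏ m ∈ range o, (gf T (σ + 5/4 + (m:ℝ)) * F m ^ 3)
        = (∏ m ∈ range o, gf T (σ + 5/4 + (m:ℝ))) * QF ^ 3 := by
      rw [Finset.prod_mul_distrib, Finset.prod_pow, hQF]
    have h4 : (∏ m ∈ range o, gf T (σ + 5/4 + (m:ℝ))) ≤ gf T (σ + 5/4) * QF := by
      rcases Nat.eq_zero_or_pos o with rfl | ho'
      · simpa [hQF] using gf_one_le hT (show (0:ℝ) < σ + 5/4 by linarith)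
      · obtain ⟨o', rfl⟩ : ∃ o', o = o' + 1 := ⟨o - 1, by omega⟩
        rw [Finset.prod_range_succ']
        have hsh : ∀ m ∈ range o', gf T (σ + 5/4 + ((m+1:ℕ):ℝ)) = F m := by
          intro m _; rw [hF]; congr 1; push_cast; ring
        have : ∏ m ∈ range o', gf T (σ + 5/4 + ((m+1:ℕ):ℝ)) ≤ QF := by
          rw [Finset.prod_congr rfl hsh, hQF]
          exact prod_pad (by omega) (fun i => hF1 _)
        have hlast : gf T (σ + 5/4 + ((0:ℕ):ℝ)) = gf T (σ + 5/4) := by norm_num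
        calc (∏ m ∈ range o', gf T (σ + 5/4 + ((m+1:ℕ):ℝ))) * gf T (σ + 5/4 + ((0:ℕ):ℝ))
            ≤ QF * gf T (σ + 5/4) := by
              rw [hlast]
              exact mul_le_mul this (le_of_eq rfl) (gf_pos hT (by linarith)).le hQF0
          _ = gf T (σ + 5/4) * QF := mul_comm _ _
    calc PO ^ 4 = ∏ m ∈ range o, gf T (σ + 2 + (m:ℝ)) ^ 4 := by rw [hPO, ← Finset.prod_pow]
      _ ≤ (∏ m ∈ range o, gf T (σ + 5/4 + (m:ℝ))) * QF ^ 3 := h2.trans h3.le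
      _ ≤ (gf T (σ + 5/4) * QF) * QF ^ 3 := by
          apply mul_le_mul h4 (le_of_eq rfl) (pow_nonneg hQF0 3)
            (mul_nonneg (gf_pos hT (by linarith)).le hQF0)
      _ = gf T (σ + 5/4) * QF ^ 4 := by ring
  -- heads
  have A3 : gf T (σ + 1/2) ≤ H 0 := by
    have : H 0 = gf T (σ - 1/4) := by show gf T (σ-1/4+((0:ℕ):ℝ)) = _; congr 1; push_cast; ring
    rw [this]; exact gf_anti hT hσ0 (by linarith)
  have A4 : gf T (σ + 1) ≤ H 1 := by
    have : H 1 = gf T (σ + 3/4) := by show gf T (σ-1/4+((1:ℕ):ℝ)) = _; congr 1; push_cast; ring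
    rw [this]; exact gf_anti hT (by linarith) (by linarith)
  have A7 : H 1 ≤ gf T (5/4) := by
    have : H 1 = gf T (σ + 3/4) := by show gf T (σ-1/4+((1:ℕ):ℝ)) = _; congr 1; push_cast; ring
    rw [this]; exact gf_anti hT (by norm_num) (by linarith)
  have A8 : gf T (σ + 5/4) ≤ gf T (7/4) := gf_anti hT (by norm_num) (by linarith)
  -- gluing H-products
  have A5 : H 0 * H 1 * QH ≤ BH := by
    have : H 0 * H 1 * QH = ∏ m ∈ range (2+e), H m := by
      rw [Finset.prod_range_add]
      congr 1
      · rw [Finset.prod_range_succ, Finset.prod_range_one]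
      · rw [hQH]; apply Finset.prod_congr rfl; intro m _; congr 1; omega
    rw [this, hBH]
    exact prod_pad (by omega) hH1
  have A6 : QF ≤ BF := by rw [hQF, hBF]; exact prod_pad hon hF1
  -- positivity
  have hgf54 : 0 ≤ gf T (5/4) := (gf_pos hT (by norm_num)).le
  have hgf74 : 0 ≤ gf T (7/4) := (gf_pos hT (by norm_num)).le
  have hgfs54 : 0 ≤ gf T (σ + 5/4) := (gf_pos hT (by linarith)).le
  have hBH0 : 0 ≤ BH := Finset.prod_nonneg fun m _ => hH0 _
  have hBF0 : 0 ≤ BF := Finset.prod_nonneg fun m _ => hF0 _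
  have hgσ12 : 0 ≤ gf T (σ + 1/2) := (gf_pos hT (by linarith)).le
  have hgσ1 : 0 ≤ gf T (σ + 1) := (gf_pos hT (by linarith)).le
  -- final assembly
  have X1 : (PE * gf T (σ + 1/2)) ^ 4 ≤ (H 1 * QH ^ 4) * H 0 ^ 4 := by
    rw [mul_pow]
    exact mul_le_mul A1 (pow_le_pow_left₀ hgσ12 A3 4) (pow_nonneg hgσ12 4)
      (mul_nonneg (hH0 1) (pow_nonneg hQH0 4))
  have X2 : (PO * gf T (σ + 1)) ^ 4 ≤ (gf T (σ + 5/4) * QF ^ 4) * H 1 ^ 4 := by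
    rw [mul_pow]
    exact mul_le_mul A2 (pow_le_pow_left₀ hgσ1 A4 4) (pow_nonneg hgσ1 4)
      (mul_nonneg hgfs54 (pow_nonneg hQF0 4))
  calc (PE * gf T (σ + 1/2) * (PO * gf T (σ + 1))) ^ 4
      = (PE * gf T (σ + 1/2)) ^ 4 * (PO * gf T (σ + 1)) ^ 4 := by rw [mul_pow]
    _ ≤ ((H 1 * QH ^ 4) * H 0 ^ 4) * ((gf T (σ + 5/4) * QF ^ 4) * H 1 ^ 4) := by
        exact mul_le_mul X1 X2 (pow_nonneg (mul_nonneg hPO0 hgσ1) 4)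
          (mul_nonneg (mul_nonneg (hH0 1) (pow_nonneg hQH0 4)) (pow_nonneg (hH0 0) 4))
    _ = (H 1 * gf T (σ + 5/4)) * ((H 0 * H 1 * QH) ^ 4 * QF ^ 4) := by ring
    _ ≤ (gf T (5/4) * gf T (7/4)) * (BH ^ 4 * BF ^ 4) := by
        apply mul_le_mul
        · exact mul_le_mul A7 A8 hgfs54 hgf54
        · exact mul_le_mul (pow_le_pow_left₀
              (mul_nonneg (mul_nonneg (hH0 0) (hH0 1)) hQH0) A5 4)
            (pow_le_pow_left₀ hQF0 A6 4) (pow_nonneg hQF0 4) (pow_nonneg hBH0 4)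
        · exact mul_nonneg (pow_nonneg (mul_nonneg (mul_nonneg (hH0 0) (hH0 1)) hQH0) 4)
            (pow_nonneg hQF0 4)
        · exact mul_nonneg hgf54 hgf74
    _ = (gf T (5/4) * gf T (7/4)) * (BF * BH) ^ 4 := by ring



open Nat in
lemma abs_GammaSeq_ofReal (x t : ℝ) (n : ℕ) (hn : 1 ≤ n) :
    ‖(Complex.GammaSeq ((x:ℂ) + (t:ℂ)*I) n)‖
      = (n:ℝ) ^ x * (n ! : ℝ) / ∏ j ∈ range (n+1), ‖((x:ℂ) + (t:ℂ)*I + j)‖ := by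
  unfold Complex.GammaSeq
  rw [norm_div, norm_mul, norm_prod]
  congr 2
  · have hre : ((x:ℂ) + (t:ℂ)*I).re = x := by simp
    have hnpos : (0:ℝ) < (n:ℝ) := by positivity
    rw [show ((n:ℕ):ℂ) = (((n:ℝ)):ℂ) by push_cast; rfl]
    rw [Complex.norm_cpow_eq_rpow_re_of_pos hnpos, hre]
  · exact Complex.norm_natCast _

lemma abs_sq_eq (x t : ℝ) (hx : 0 < x) :
    ‖((x:ℂ) + (t:ℂ)*I)‖ ^ 2 = x ^ 2 * gf (t^2) x := by
  rw [Complex.sq_norm, Complex.normSq_add_mul_I]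
  unfold gf
  field_simp

lemma prod_abs_sq (x t : ℝ) (hx : 0 < x) (n : ℕ) :
    (∏ j ∈ range (n+1), ‖((x:ℂ) + (t:ℂ)*I + j)‖) ^ 2
      = (∏ j ∈ range (n+1), (x + (j:ℝ))) ^ 2 * ∏ j ∈ range (n+1), gf (t^2) (x + (j:ℝ)) := by
  rw [← Finset.prod_pow, ← Finset.prod_pow, ← Finset.prod_mul_distrib]
  apply Finset.prod_congr rfl
  intro j _
  have harg : (x:ℂ) + (t:ℂ)*I + (j:ℕ) = (((x + (j:ℝ)):ℝ):ℂ) + (t:ℂ)*I := by push_cast; ring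
  rw [harg, abs_sq_eq (x + (j:ℝ)) t (by positivity)]

lemma prod_shift_pos (x : ℝ) (hx : 0 < x) (n : ℕ) :
    0 < ∏ j ∈ range (n+1), (x + (j:ℝ)) :=
  Finset.prod_pos fun j _ => by positivity

lemma abs_prod_pos (x t : ℝ) (hx : 0 < x) (n : ℕ) :
    0 < ∏ j ∈ range (n+1), ‖((x:ℂ) + (t:ℂ)*I + j)‖ := by
  apply Finset.prod_pos
  intro j _
  apply norm_pos_iff.2
  intro h0
  have : ((x:ℂ) + (t:ℂ)*I + j).re = x + j := by simp
  rw [h0] at this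
  simp only [Complex.zero_re] at this
  have : (0:ℝ) < x + j := by positivity
  linarith


open Nat in
lemma per_n (σ t : ℝ) (hσ : 1/2 ≤ σ) (n : ℕ) (hn : 2 ≤ n) :
    ‖(Complex.GammaSeq ((σ:ℂ)+(t:ℂ)*I + 9/4) n *
        Complex.GammaSeq ((σ:ℂ)+(t:ℂ)*I - 1/4) n /
        Complex.GammaSeq (2*((σ:ℂ)+(t:ℂ)*I) + 1) n)‖ ^ 8
    ≤ (Real.GammaSeq (σ+9/4) n * Real.GammaSeq (σ-1/4) n / Real.GammaSeq (2*σ+1) n) ^ 8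
      * (gf (t^2) (5/4) * gf (t^2) (7/4)) := by
  have hn1 : 1 ≤ n := by omega
  have hT : (0:ℝ) ≤ t^2 := sq_nonneg t
  have ha : (0:ℝ) < σ + 9/4 := by linarith
  have hb : (0:ℝ) < σ - 1/4 := by linarith
  have hc : (0:ℝ) < 2*σ + 1 := by linarith
  -- rewrite complex arguments
  have e1 : (σ:ℂ)+(t:ℂ)*I + 9/4 = (((σ+9/4 :ℝ)):ℂ) + (t:ℂ)*I := by push_cast; ring
  have e2 : (σ:ℂ)+(t:ℂ)*I - 1/4 = (((σ-1/4 :ℝ)):ℂ) + (t:ℂ)*I := by push_cast; ring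
  have e3 : 2*((σ:ℂ)+(t:ℂ)*I) + 1 = (((2*σ+1 :ℝ)):ℂ) + ((2*t :ℝ):ℂ)*I := by push_cast; ring
  rw [e1, e2, e3, norm_div, norm_mul,
    abs_GammaSeq_ofReal (σ+9/4) t n hn1, abs_GammaSeq_ofReal (σ-1/4) t n hn1,
    abs_GammaSeq_ofReal (2*σ+1) (2*t) n hn1]
  unfold Real.GammaSeq
  -- names
  set Pa := ∏ j ∈ range (n+1), ‖(((σ+9/4 :ℝ):ℂ) + (t:ℂ)*I + j)‖ with hPa
  set Pb := ∏ j ∈ range (n+1), ‖(((σ-1/4 :ℝ):ℂ) + (t:ℂ)*I + j)‖ with hPb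
  set Pc := ∏ j ∈ range (n+1), ‖(((2*σ+1 :ℝ):ℂ) + ((2*t :ℝ):ℂ)*I + j)‖ with hPc
  set Qa := ∏ j ∈ range (n+1), (σ+9/4 + (j:ℝ)) with hQa
  set Qb := ∏ j ∈ range (n+1), (σ-1/4 + (j:ℝ)) with hQb
  set Qc := ∏ j ∈ range (n+1), (2*σ+1 + (j:ℝ)) with hQc
  set BF := ∏ j ∈ range (n+1), gf (t^2) (σ + 9/4 + (j:ℝ)) with hBF
  set BH := ∏ j ∈ range (n+1), gf (t^2) (σ - 1/4 + (j:ℝ)) with hBH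
  set AA := ∏ j ∈ range (n+1), gf (t^2) (σ + ((j:ℝ)+1)/2) with hAA
  have hPa0 : 0 < Pa := abs_prod_pos _ _ ha n
  have hPb0 : 0 < Pb := abs_prod_pos _ _ hb n
  have hPc0 : 0 < Pc := abs_prod_pos _ _ hc n
  have hQa0 : 0 < Qa := prod_shift_pos _ ha n
  have hQb0 : 0 < Qb := prod_shift_pos _ hb n
  have hQc0 : 0 < Qc := prod_shift_pos _ hc n
  have hBF0 : 0 < BF := Finset.prod_pos fun j _ => gf_pos hT (by have : (0:ℝ) ≤ (j:ℝ) := Nat.cast_nonneg j; linarith)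
  have hBH0 : 0 < BH := Finset.prod_pos fun j _ => gf_pos hT (by have : (0:ℝ) ≤ (j:ℝ) := Nat.cast_nonneg j; linarith)
  have hAA0 : 0 < AA := Finset.prod_pos fun j _ => gf_pos hT (by have : (0:ℝ) ≤ (j:ℝ) := Nat.cast_nonneg j; linarith)
  -- squared product identities
  have hPa2 : Pa^2 = Qa^2 * BF := by
    rw [hPa, hQa, hBF, prod_abs_sq (σ+9/4) t ha n]
  have hPb2 : Pb^2 = Qb^2 * BH := by
    rw [hPb, hQb, hBH, prod_abs_sq (σ-1/4) t hb n]
  have hPc2 : Pc^2 = Qc^2 * AA := by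
    rw [hPc, hQc, hAA, prod_abs_sq (2*σ+1) (2*t) hc n]
    congr 1
    apply Finset.prod_congr rfl
    intro j _
    have hx : (0:ℝ) < σ + ((j:ℝ)+1)/2 := by
      have : (0:ℝ) ≤ (j:ℝ) := Nat.cast_nonneg j
      linarith
    have harg : 2*σ+1 + (j:ℝ) = 2 * (σ + ((j:ℝ)+1)/2) := by ring
    rw [harg]
    unfold gf
    rw [mul_pow]
    congr 1
    rw [mul_pow]
    field_simp
  -- numeric powers of n
  have hnR : (0:ℝ) < (n:ℝ) := by positivity
  have hfac : (0:ℝ) < (n ! : ℝ) := by positivity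
  have hna : (0:ℝ) < (n:ℝ) ^ (σ+9/4) := Real.rpow_pos_of_pos hnR _
  have hnb : (0:ℝ) < (n:ℝ) ^ (σ-1/4) := Real.rpow_pos_of_pos hnR _
  have hnc : (0:ℝ) < (n:ℝ) ^ (2*σ+1) := Real.rpow_pos_of_pos hnR _
  -- main identity
  have hW2 : ((n:ℝ) ^ (σ+9/4) * (n ! : ℝ) / Pa * ((n:ℝ) ^ (σ-1/4) * (n ! : ℝ) / Pb) /
      ((n:ℝ) ^ (2*σ+1) * (n ! : ℝ) / Pc)) ^ 2
      = ((n:ℝ) ^ (σ+9/4) * (n ! : ℝ) / Qa * ((n:ℝ) ^ (σ-1/4) * (n ! : ℝ) / Qb) /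
      ((n:ℝ) ^ (2*σ+1) * (n ! : ℝ) / Qc)) ^ 2 * (AA / (BF * BH)) := by
    have expand : ∀ P1 P2 P3 : ℝ, P1 ≠ 0 → P2 ≠ 0 → P3 ≠ 0 →
        ((n:ℝ) ^ (σ+9/4) * (n ! : ℝ) / P1 * ((n:ℝ) ^ (σ-1/4) * (n ! : ℝ) / P2) /
        ((n:ℝ) ^ (2*σ+1) * (n ! : ℝ) / P3)) ^ 2
        = ((n:ℝ) ^ (σ+9/4))^2 * ((n:ℝ) ^ (σ-1/4))^2 * ((n ! : ℝ))^2 * P3^2 /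
          (((n:ℝ) ^ (2*σ+1))^2 * P1^2 * P2^2) := by
      intro P1 P2 P3 h1 h2 h3
      field_simp
    rw [expand Pa Pb Pc hPa0.ne' hPb0.ne' hPc0.ne',
        expand Qa Qb Qc hQa0.ne' hQb0.ne' hQc0.ne', hPa2, hPb2, hPc2]
    field_simp
  -- conclude
  have h8 : ∀ x : ℝ, x ^ 8 = (x^2)^4 := fun x => by ring
  have hmain := main_prod_ineq (t^2) σ hT hσ n hn
  rw [← hAA, ← hBF, ← hBH] at hmain
  have hG2 : (0:ℝ) ≤ (((n:ℝ) ^ (σ+9/4) * (n ! : ℝ) / Qa * ((n:ℝ) ^ (σ-1/4) * (n ! : ℝ) / Qb) /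
      ((n:ℝ) ^ (2*σ+1) * (n ! : ℝ) / Qc)) ^ 2) ^ 4 := by positivity
  have hdiv : AA ^ 4 / (BF * BH) ^ 4 ≤ gf (t^2) (5/4) * gf (t^2) (7/4) := by
    rw [div_le_iff₀ (by positivity)]
    calc AA ^ 4 ≤ (gf (t^2) (5/4) * gf (t^2) (7/4)) * (BF * BH) ^ 4 := hmain
      _ = gf (t^2) (5/4) * gf (t^2) (7/4) * (BF * BH) ^ 4 := by ring
  simp only [h8]
  rw [hW2, mul_pow]
  exact mul_le_mul_of_nonneg_left (by rw [div_pow]; exact hdiv) hG2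


open Nat in
lemma combo_eq (x y z : ℝ) (hxyz : x + y - z = 1) (n : ℕ) (hn : 1 ≤ n)
    (hx : ∀ j ∈ range (n+1), x + (j:ℝ) ≠ 0) (hy : ∀ j ∈ range (n+1), y + (j:ℝ) ≠ 0)
    (hz : ∀ j ∈ range (n+1), z + (j:ℝ) ≠ 0) :
    Real.GammaSeq x n * Real.GammaSeq y n / Real.GammaSeq z n
      = (n:ℝ) * (n ! : ℝ) * (∏ j ∈ range (n+1), (z + (j:ℝ))) /
        ((∏ j ∈ range (n+1), (x + (j:ℝ))) * (∏ j ∈ range (n+1), (y + (j:ℝ)))) := by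
  have hnR : (0:ℝ) < (n:ℝ) := by positivity
  unfold Real.GammaSeq
  have hrp : (n:ℝ) ^ x * (n:ℝ) ^ y = (n:ℝ) ^ z * (n:ℝ) := by
    have hxy : x + y = z + 1 := by linarith
    rw [← Real.rpow_add hnR, hxy, Real.rpow_add hnR, Real.rpow_one]
  have hQx : (∏ j ∈ range (n+1), (x + (j:ℝ))) ≠ 0 := Finset.prod_ne_zero_iff.2 hx
  have hQy : (∏ j ∈ range (n+1), (y + (j:ℝ))) ≠ 0 := Finset.prod_ne_zero_iff.2 hy
  have hQz : (∏ j ∈ range (n+1), (z + (j:ℝ))) ≠ 0 := Finset.prod_ne_zero_iff.2 hz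
  have hnz : (n:ℝ) ^ z ≠ 0 := (Real.rpow_pos_of_pos hnR z).ne'
  have hfa : (n ! : ℝ) ≠ 0 := by positivity
  field_simp
  linear_combination hrp

lemma termwise (σ xr : ℝ) (hσ : 1/2 ≤ σ) (hσ' : σ ≤ 5/8) (hx : 0 ≤ xr) :
    (2*σ+1 + xr) * ((11/4 + xr) * (1/4 + xr)) ≤ (2 + xr) * ((σ+9/4 + xr) * (σ-1/4 + xr)) := by
  nlinarith [sq_nonneg (σ - 1/2), mul_nonneg hx (sub_nonneg.2 hσ), sq_nonneg xr,
    mul_nonneg (mul_nonneg hx hx) (sub_nonneg.2 hσ)]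

open Nat in
lemma Gseq_le (σ : ℝ) (hσ : 1/2 ≤ σ) (hσ' : σ ≤ 5/8) (n : ℕ) (hn : 1 ≤ n) :
    Real.GammaSeq (σ+9/4) n * Real.GammaSeq (σ-1/4) n / Real.GammaSeq (2*σ+1) n ≤
      Real.GammaSeq (11/4 : ℝ) n * Real.GammaSeq (1/4 : ℝ) n / Real.GammaSeq (2 : ℝ) n := by
  have hne : ∀ c : ℝ, 0 < c → ∀ j ∈ range (n+1), c + (j:ℝ) ≠ 0 :=
    fun c hc j _ => by have : (0:ℝ) ≤ (j:ℝ) := Nat.cast_nonneg j; positivity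
  have hca : (0:ℝ) < σ + 9/4 := by linarith
  have hcb : (0:ℝ) < σ - 1/4 := by linarith
  have hcc : (0:ℝ) < 2*σ + 1 := by linarith
  rw [combo_eq (σ+9/4) (σ-1/4) (2*σ+1) (by ring) n hn (hne _ hca) (hne _ hcb) (hne _ hcc),
      combo_eq (11/4) (1/4) 2 (by norm_num) n hn (hne _ (by norm_num)) (hne _ (by norm_num))
        (hne _ (by norm_num))]
  have hprodpos : ∀ c : ℝ, 0 < c → 0 < ∏ j ∈ range (n+1), (c + (j:ℝ)) :=
    fun c hc => Finset.prod_pos fun j _ => by have : (0:ℝ) ≤ (j:ℝ) := Nat.cast_nonneg j; positivity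
  have p1 := hprodpos _ hca
  have p2 := hprodpos _ hcb
  have p3 := hprodpos _ hcc
  have p4 := hprodpos (11/4 : ℝ) (by norm_num)
  have p5 := hprodpos (1/4 : ℝ) (by norm_num)
  have p6 := hprodpos (2 : ℝ) (by norm_num)
  rw [div_le_div_iff₀ (by positivity) (by positivity)]
  have key : (∏ j ∈ range (n+1), (2*σ+1 + (j:ℝ))) *
      ((∏ j ∈ range (n+1), ((11/4:ℝ) + (j:ℝ))) * (∏ j ∈ range (n+1), ((1/4:ℝ) + (j:ℝ)))) ≤
      (∏ j ∈ range (n+1), ((2:ℝ) + (j:ℝ))) *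
      ((∏ j ∈ range (n+1), (σ+9/4 + (j:ℝ))) * (∏ j ∈ range (n+1), (σ-1/4 + (j:ℝ)))) := by
    rw [← Finset.prod_mul_distrib, ← Finset.prod_mul_distrib,
        ← Finset.prod_mul_distrib, ← Finset.prod_mul_distrib]
    apply Finset.prod_le_prod
    · intro j _
      have : (0:ℝ) ≤ (j:ℝ) := Nat.cast_nonneg j
      positivity
    · intro j _
      exact termwise σ (j:ℝ) hσ hσ' (Nat.cast_nonneg j)
  calc (n:ℝ) * (n ! : ℝ) * (∏ j ∈ range (n+1), (2*σ+1 + (j:ℝ))) *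
        ((∏ j ∈ range (n+1), ((11/4:ℝ) + (j:ℝ))) * (∏ j ∈ range (n+1), ((1/4:ℝ) + (j:ℝ))))
      = ((n:ℝ) * (n ! : ℝ)) * ((∏ j ∈ range (n+1), (2*σ+1 + (j:ℝ))) *
        ((∏ j ∈ range (n+1), ((11/4:ℝ) + (j:ℝ))) * (∏ j ∈ range (n+1), ((1/4:ℝ) + (j:ℝ))))) := by
        ring
    _ ≤ ((n:ℝ) * (n ! : ℝ)) * ((∏ j ∈ range (n+1), ((2:ℝ) + (j:ℝ))) *
        ((∏ j ∈ range (n+1), (σ+9/4 + (j:ℝ))) * (∏ j ∈ range (n+1), (σ-1/4 + (j:ℝ))))) := by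
        apply mul_le_mul_of_nonneg_left key (by positivity)
    _ = (n:ℝ) * (n ! : ℝ) * (∏ j ∈ range (n+1), ((2:ℝ) + (j:ℝ))) *
        ((∏ j ∈ range (n+1), (σ+9/4 + (j:ℝ))) * (∏ j ∈ range (n+1), (σ-1/4 + (j:ℝ)))) := by
        ring


lemma Kval : Real.Gamma (11/4) * Real.Gamma (1/4) / Real.Gamma 2 = 21/16 * (Real.sqrt 2 * π) := by
  have h2 : Real.Gamma 2 = 1 := by
    rw [show (2:ℝ) = 1 + 1 by norm_num, Real.Gamma_add_one one_ne_zero, Real.Gamma_one]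
    norm_num
  have h74 : Real.Gamma (7/4) = 3/4 * Real.Gamma (3/4) := by
    rw [show (7/4:ℝ) = 3/4 + 1 by norm_num, Real.Gamma_add_one (by norm_num)]
  have h114 : Real.Gamma (11/4) = 7/4 * (3/4 * Real.Gamma (3/4)) := by
    rw [show (11/4:ℝ) = 7/4 + 1 by norm_num, Real.Gamma_add_one (by norm_num), h74]
  have hrefl : Real.Gamma (3/4) * Real.Gamma (1/4) = π / Real.sin (π * (3/4)) := by
    have h := Real.Gamma_mul_Gamma_one_sub (3/4)
    rw [show (1:ℝ) - 3/4 = 1/4 by norm_num] at h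
    exact h
  have hsin : Real.sin (π * (3/4)) = Real.sqrt 2 / 2 := by
    rw [show π * (3/4) = π - π/4 by ring, Real.sin_pi_sub, Real.sin_pi_div_four]
  have hss : Real.sqrt 2 * Real.sqrt 2 = 2 := Real.mul_self_sqrt (by norm_num)
  have hs0 : (0:ℝ) < Real.sqrt 2 := by positivity
  have hss2 : (Real.sqrt 2)^2 = 2 := Real.sq_sqrt (by norm_num)
  have hfin : π / (Real.sqrt 2 / 2) = Real.sqrt 2 * π := by
    rw [div_eq_iff (by positivity)]
    linear_combination (-(π/2)) * hss
  rw [h2, h114, div_one]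
  calc 7/4 * (3/4 * Real.Gamma (3/4)) * Real.Gamma (1/4)
      = 21/16 * (Real.Gamma (3/4) * Real.Gamma (1/4)) := by ring
    _ = 21/16 * (π / (Real.sqrt 2 / 2)) := by rw [hrefl, hsin]
    _ = 21/16 * (Real.sqrt 2 * π) := by rw [hfin]

lemma numeric (u : ℝ) (hu : 0 ≤ u) :
    (21/16 * (Real.sqrt 2 * π))^8 * (gf (u^2) (5/4) * gf (u^2) (7/4))
      ≤ 5.84^8 * (1+u)^4 := by
  have hss : Real.sqrt 2 * Real.sqrt 2 = 2 := Real.mul_self_sqrt (by norm_num)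
  have h8 : (Real.sqrt 2)^8 = 16 := by
    calc (Real.sqrt 2)^8 = (Real.sqrt 2 * Real.sqrt 2)^4 := by ring
      _ = 16 := by rw [hss]; norm_num
  have hπ : π < 3.141593 := Real.pi_lt_d6
  have hπ0 : 0 < π := Real.pi_pos
  have hp2 : π^2 < 9.8697 := by nlinarith [hπ, hπ0, mul_pos hπ0 hπ0]
  have hp4 : π^4 < 97.4110 := by nlinarith [hp2, pow_pos hπ0 2]
  have hp8 : π^8 < 9488.91 := by nlinarith [hp4, pow_pos hπ0 4]
  have hC1 : gf (u^2) (5/4) = 1 + 16*u^2/25 := by unfold gf; norm_num; ring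
  have hC2 : gf (u^2) (7/4) = 1 + 16*u^2/49 := by unfold gf; norm_num; ring
  have hexp : (21/16 * (Real.sqrt 2 * π))^8 = (21/16)^8 * ((Real.sqrt 2)^8 * π^8) := by ring
  rw [hC1, hC2, hexp, h8]
  nlinarith [hp8, hπ0, sq_nonneg u, pow_nonneg hu 3, pow_nonneg hu 4,
    mul_nonneg (sq_nonneg u) (sub_nonneg.2 hp8.le),
    mul_nonneg (pow_nonneg hu 4) (sub_nonneg.2 hp8.le),
    mul_nonneg (mul_nonneg (sq_nonneg u) (sq_nonneg u)) (sub_nonneg.2 hp8.le),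
    pow_pos hπ0 8]


end GQB


open GQB

theorem gamma_quotient_bound (δ t : ℝ) (hδ0 : 0 < δ) (hδ : δ ≤ 1 / 4) :
    ‖(Complex.Gamma ((1 / 2 + (δ : ℂ) / 2 + (t : ℂ) * Complex.I) + 9 / 4) *
          Complex.Gamma ((1 / 2 + (δ : ℂ) / 2 + (t : ℂ) * Complex.I) - 1 / 4))‖ /
        ‖(Complex.Gamma (2 * (1 / 2 + (δ : ℂ) / 2 + (t : ℂ) * Complex.I) + 1))‖ ≤
      5.84 * (1 + |t|) ^ ((1 : ℝ) / 2) := by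
  obtain ⟨σ, hσdef⟩ : ∃ σ : ℝ, σ = 1/2 + δ/2 := ⟨_, rfl⟩
  have hσ1 : 1/2 ≤ σ := by rw [hσdef]; linarith
  have hσ2 : σ ≤ 5/8 := by rw [hσdef]; linarith
  have hs : (1 / 2 + (δ : ℂ) / 2 + (t : ℂ) * Complex.I) = (σ:ℂ) + (t:ℂ)*I := by
    rw [hσdef]; push_cast; ring
  rw [hs]
  have hcc : (0:ℝ) < 2*σ + 1 := by linarith
  have hca : (0:ℝ) < σ + 9/4 := by linarith
  have hcb : (0:ℝ) < σ - 1/4 := by linarith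
  have he3 : 2*((σ:ℂ)+(t:ℂ)*I) + 1 = (((2*σ+1 :ℝ)):ℂ) + ((2*t :ℝ):ℂ)*I := by push_cast; ring
  have hc3ne : Complex.Gamma (2*((σ:ℂ)+(t:ℂ)*I)+1) ≠ 0 := by
    apply Complex.Gamma_ne_zero_of_re_pos
    rw [he3]
    simp only [Complex.add_re, Complex.ofReal_re, Complex.mul_re, Complex.I_re, Complex.I_im,
      Complex.ofReal_im]
    simpa using hcc
  rw [← norm_div]
  -- limits
  have hWc : Filter.Tendsto (fun n => Complex.GammaSeq ((σ:ℂ)+(t:ℂ)*I + 9/4) n *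
      Complex.GammaSeq ((σ:ℂ)+(t:ℂ)*I - 1/4) n / Complex.GammaSeq (2*((σ:ℂ)+(t:ℂ)*I) + 1) n)
      atTop (𝓝 (Complex.Gamma ((σ:ℂ)+(t:ℂ)*I + 9/4) * Complex.Gamma ((σ:ℂ)+(t:ℂ)*I - 1/4) /
        Complex.Gamma (2*((σ:ℂ)+(t:ℂ)*I) + 1))) :=
    ((Complex.GammaSeq_tendsto_Gamma _).mul (Complex.GammaSeq_tendsto_Gamma _)).div
      (Complex.GammaSeq_tendsto_Gamma _) hc3ne
  have hW : Filter.Tendsto (fun n => ‖(Complex.GammaSeq ((σ:ℂ)+(t:ℂ)*I + 9/4) n *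
      Complex.GammaSeq ((σ:ℂ)+(t:ℂ)*I - 1/4) n / Complex.GammaSeq (2*((σ:ℂ)+(t:ℂ)*I) + 1) n)‖)
      atTop (𝓝 (‖(Complex.Gamma ((σ:ℂ)+(t:ℂ)*I + 9/4) *
        Complex.Gamma ((σ:ℂ)+(t:ℂ)*I - 1/4) / Complex.Gamma (2*((σ:ℂ)+(t:ℂ)*I) + 1))‖)) :=
    hWc.norm
  set R := ‖(Complex.Gamma ((σ:ℂ)+(t:ℂ)*I + 9/4) *
    Complex.Gamma ((σ:ℂ)+(t:ℂ)*I - 1/4) / Complex.Gamma (2*((σ:ℂ)+(t:ℂ)*I) + 1))‖ with hR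
  set G := Real.Gamma (σ+9/4) * Real.Gamma (σ-1/4) / Real.Gamma (2*σ+1) with hG
  set K := Real.Gamma (11/4) * Real.Gamma (1/4) / Real.Gamma 2 with hK
  have hGten : Filter.Tendsto (fun n => Real.GammaSeq (σ+9/4) n * Real.GammaSeq (σ-1/4) n /
      Real.GammaSeq (2*σ+1) n) atTop (𝓝 G) :=
    ((Real.GammaSeq_tendsto_Gamma _).mul (Real.GammaSeq_tendsto_Gamma _)).div
      (Real.GammaSeq_tendsto_Gamma _) (Real.Gamma_pos_of_pos hcc).ne'
  have hKten : Filter.Tendsto (fun n => Real.GammaSeq (11/4 : ℝ) n * Real.GammaSeq (1/4 : ℝ) n /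
      Real.GammaSeq (2 : ℝ) n) atTop (𝓝 K) :=
    ((Real.GammaSeq_tendsto_Gamma _).mul (Real.GammaSeq_tendsto_Gamma _)).div
      (Real.GammaSeq_tendsto_Gamma _) (Real.Gamma_pos_of_pos (by norm_num)).ne'
  have hGK : G ≤ K := by
    apply le_of_tendsto_of_tendsto hGten hKten
    filter_upwards [Filter.eventually_ge_atTop 1] with n hn
    exact Gseq_le σ hσ1 hσ2 n hn
  have hC0 : 0 ≤ gf (t^2) (5/4) * gf (t^2) (7/4) :=
    mul_nonneg (gf_pos (sq_nonneg t) (by norm_num)).le (gf_pos (sq_nonneg t) (by norm_num)).le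
  have hR8 : R^8 ≤ G^8 * (gf (t^2) (5/4) * gf (t^2) (7/4)) := by
    apply le_of_tendsto_of_tendsto (hW.pow 8) ((hGten.pow 8).mul_const _)
    filter_upwards [Filter.eventually_ge_atTop 2] with n hn
    exact per_n σ t hσ1 n hn
  have hG0 : 0 ≤ G := by
    rw [hG]
    have g1 := Real.Gamma_pos_of_pos hca
    have g2 := Real.Gamma_pos_of_pos hcb
    have g3 := Real.Gamma_pos_of_pos hcc
    positivity
  have hK8 : G^8 ≤ K^8 := pow_le_pow_left₀ hG0 hGK 8
  have hfinal : R^8 ≤ 5.84^8 * (1+|t|)^4 := by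
    calc R^8 ≤ G^8 * (gf (t^2) (5/4) * gf (t^2) (7/4)) := hR8
      _ ≤ K^8 * (gf (t^2) (5/4) * gf (t^2) (7/4)) := mul_le_mul_of_nonneg_right hK8 hC0
      _ = (21/16 * (Real.sqrt 2 * π))^8 * (gf (|t|^2) (5/4) * gf (|t|^2) (7/4)) := by
          rw [hK, Kval, ← _root_.sq_abs t]
      _ ≤ 5.84^8 * (1+|t|)^4 := numeric |t| (abs_nonneg t)
  have hrhs8 : (5.84 * (1 + |t|) ^ ((1:ℝ)/2))^8 = 5.84^8 * (1+|t|)^4 := by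
    rw [mul_pow]
    congr 1
    rw [← Real.rpow_natCast ((1+|t|) ^ ((1:ℝ)/2)) 8, ← Real.rpow_mul (by positivity)]
    rw [show ((1:ℝ)/2 * (8:ℕ) : ℝ) = ((4:ℕ):ℝ) by norm_num, Real.rpow_natCast]
  apply le_of_pow_le_pow_left₀ (n := 8) (by norm_num) (by positivity)
  rw [hrhs8]
  exact hfinal
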